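/- Let G : ℝᵖ → ℝⁿ satisfy, for some bounded map A : ℝᵖ → Hom(ℝᵖ, ℝⁿ) with ‖A(g)‖ ≤ M, the expansion |G(g + h) − G(g) − A(g)h| ≤ C₁|h|^{3/2} for all g, h with |h| ≤ 1. Let f : ℝⁿ → ℝ be (2/3)-Hölder continuous with constant c₀ and satisfy the Zygmund estimate |f(z + v) + f(z − v) − 2f(z)| ≤ C₀|v| for all z, v. Then there is a constant C' (depending on M, C₀, C₁, c₀) such that for all g and all |h| ≤ 1: |f(G(g + h)) + f(G(g − h)) − 2f(G(g))| ≤ C'|h|. -/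

import Mathlib

/-- Key computation for the group-direction derivative of an isometric action:
`f ∘ G` satisfies a `C¹_*` Zygmund estimate. -/
theorem zygmund_of_composition_with_expansion {P N : Type*}
    [NormedAddCommGroup P] [NormedSpace ℝ P] [NormedAddCommGroup N] [NormedSpace ℝ N]
    (G : P → N) (A : P → (P →L[ℝ] N)) (M C₀ C₁ c₀ : ℝ)
    (hA : ∀ g : P, ‖A g‖ ≤ M)
    (hexp : ∀ g h : P, ‖h‖ ≤ 1 → ‖G (g + h) - G g - A g h‖ ≤ C₁ * ‖h‖ ^ ((3:ℝ)/2))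
    (f : N → ℝ)
    (hHold : ∀ z z' : N, |f z - f z'| ≤ c₀ * ‖z - z'‖ ^ ((2:ℝ)/3))
    (hZ : ∀ z v : N, |f (z + v) + f (z - v) - 2 * f z| ≤ C₀ * ‖v‖) :
    ∃ C' : ℝ, ∀ g h : P, ‖h‖ ≤ 1 →
      |f (G (g + h)) + f (G (g - h)) - 2 * f (G g)| ≤ C' * ‖h‖ := by
  refine ⟨2 * |c₀| * |C₁| ^ ((2:ℝ)/3) + |C₀| * M, fun g h hh => ?_⟩
  set z := G g with hz
  set v := A g h with hv
  have hM : 0 ≤ M := le_trans (norm_nonneg _) (hA g)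
  have e1 : ‖G (g + h) - (z + v)‖ ≤ C₁ * ‖h‖ ^ ((3:ℝ)/2) := by
    have := hexp g h hh
    have heq : G (g + h) - (z + v) = G (g + h) - z - v := by abel
    rw [heq]; exact this
  have e2 : ‖G (g - h) - (z - v)‖ ≤ C₁ * ‖h‖ ^ ((3:ℝ)/2) := by
    have := hexp g (-h) (by simpa using hh)
    have heq : G (g - h) - (z - v) = G (g + -h) - z - A g (-h) := by
      rw [map_neg, sub_eq_add_neg g h]; abel
    rw [heq]
    simpa using this
  -- bound for the rpow of the error
  have hbase : (0:ℝ) ≤ C₁ * ‖h‖ ^ ((3:ℝ)/2) := le_trans (norm_nonneg _) e1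
  have hrw : (‖h‖ ^ ((3:ℝ)/2)) ^ ((2:ℝ)/3) = ‖h‖ := by
    rw [← Real.rpow_mul (norm_nonneg h)]
    norm_num
  have hb : (C₁ * ‖h‖ ^ ((3:ℝ)/2)) ^ ((2:ℝ)/3) ≤ |C₁| ^ ((2:ℝ)/3) * ‖h‖ := by
    calc (C₁ * ‖h‖ ^ ((3:ℝ)/2)) ^ ((2:ℝ)/3)
        ≤ (|C₁| * ‖h‖ ^ ((3:ℝ)/2)) ^ ((2:ℝ)/3) := by
          apply Real.rpow_le_rpow hbase _ (by norm_num)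
          exact mul_le_mul_of_nonneg_right (le_abs_self C₁) (Real.rpow_nonneg (norm_nonneg h) _)
      _ = |C₁| ^ ((2:ℝ)/3) * (‖h‖ ^ ((3:ℝ)/2)) ^ ((2:ℝ)/3) :=
          Real.mul_rpow (abs_nonneg C₁) (Real.rpow_nonneg (norm_nonneg h) _)
      _ = |C₁| ^ ((2:ℝ)/3) * ‖h‖ := by rw [hrw]
  -- Hölder bounds on the two corrections
  have hold : ∀ w w' : N, ‖w - w'‖ ≤ C₁ * ‖h‖ ^ ((3:ℝ)/2) →
      |f w - f w'| ≤ |c₀| * (|C₁| ^ ((2:ℝ)/3) * ‖h‖) := by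
    intro w w' hw
    calc |f w - f w'| ≤ c₀ * ‖w - w'‖ ^ ((2:ℝ)/3) := hHold w w'
      _ ≤ |c₀| * ‖w - w'‖ ^ ((2:ℝ)/3) :=
          mul_le_mul_of_nonneg_right (le_abs_self c₀) (Real.rpow_nonneg (norm_nonneg _) _)
      _ ≤ |c₀| * (C₁ * ‖h‖ ^ ((3:ℝ)/2)) ^ ((2:ℝ)/3) := by
          apply mul_le_mul_of_nonneg_left _ (abs_nonneg c₀)
          exact Real.rpow_le_rpow (norm_nonneg _) hw (by norm_num)
      _ ≤ |c₀| * (|C₁| ^ ((2:ℝ)/3) * ‖h‖) :=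
          mul_le_mul_of_nonneg_left hb (abs_nonneg c₀)
  have h1 := hold _ _ e1
  have h2 := hold _ _ e2
  -- Zygmund bound at z with step v
  have hvn : ‖v‖ ≤ M * ‖h‖ := le_trans ((A g).le_opNorm h)
    (mul_le_mul_of_nonneg_right (hA g) (norm_nonneg h))
  have h3 : |f (z + v) + f (z - v) - 2 * f z| ≤ |C₀| * M * ‖h‖ :=
    calc |f (z + v) + f (z - v) - 2 * f z| ≤ C₀ * ‖v‖ := hZ z v
      _ ≤ |C₀| * ‖v‖ := mul_le_mul_of_nonneg_right (le_abs_self C₀) (norm_nonneg v)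
      _ ≤ |C₀| * (M * ‖h‖) := mul_le_mul_of_nonneg_left hvn (abs_nonneg C₀)
      _ = |C₀| * M * ‖h‖ := by ring
  -- triangle inequality
  have tri : |f (G (g + h)) + f (G (g - h)) - 2 * f z| ≤
      |f (G (g + h)) - f (z + v)| + |f (G (g - h)) - f (z - v)| +
        |f (z + v) + f (z - v) - 2 * f z| := by
    have heq : f (G (g + h)) + f (G (g - h)) - 2 * f z =
        (f (G (g + h)) - f (z + v)) + (f (G (g - h)) - f (z - v)) +
          (f (z + v) + f (z - v) - 2 * f z) := by ring
    rw [heq]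
    exact (abs_add_le _ _).trans (add_le_add_left (abs_add_le _ _) _)
  calc |f (G (g + h)) + f (G (g - h)) - 2 * f z| ≤ _ := tri
    _ ≤ |c₀| * (|C₁| ^ ((2:ℝ)/3) * ‖h‖) + |c₀| * (|C₁| ^ ((2:ℝ)/3) * ‖h‖) +
        |C₀| * M * ‖h‖ := by gcongr
    _ = (2 * |c₀| * |C₁| ^ ((2:ℝ)/3) + |C₀| * M) * ‖h‖ := by ring
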